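/- Let G be a 3-uniform hypergraph on n vertices with no 4 edges spanning at most 6 vertices, and additionally with no 3 edges spanning at most 4 vertices. Let eᵢ (i = 1,2,3) be the number of vertex pairs with codegree exactly i, divided by n². Then −8e₁/3 + 20e₂/3 + 16e₃ ≤ 0. -/

import Mathlib

open Finset

namespace Stmt12Aux

variable {n : ℕ}

/-- codegree of a pair -/
def dG (G : Finset (Finset (Fin n))) (p : Finset (Fin n)) : ℕ :=
  (G.filter (fun e => p ⊆ e)).card

/-- number of pairs in edge `e` with codegree `k` -/
def m (G : Finset (Finset (Fin n))) (k : ℕ) (e : Finset (Fin n)) : ℕ :=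
  ((e.powersetCard 2).filter (fun p => dG G p = k)).card

lemma card_union_le' {α : Type*} [DecidableEq α] (s t : Finset α) :
    (s ∪ t).card ≤ s.card + (t \ s).card := by
  rw [← Finset.union_sdiff_self_eq_union]
  exact Finset.card_union_le s (t \ s)

lemma card_sdiff_le_one {α : Type*} [DecidableEq α] {f e : Finset α}
    (hf : f.card = 3) (h2 : 2 ≤ (f ∩ e).card) : (f \ e).card ≤ 1 := by
  have h := Finset.card_inter_add_card_sdiff f e
  omega

lemma inter_two {α : Type*} [DecidableEq α] {p x y : Finset α} (hp : p.card = 2)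
    (h1 : p ⊆ x) (h2 : p ⊆ y) : 2 ≤ (x ∩ y).card := by
  have : p ⊆ x ∩ y := Finset.subset_inter h1 h2
  calc 2 = p.card := hp.symm
  _ ≤ _ := Finset.card_le_card this

lemma card_union4 {α : Type*} [DecidableEq α] (a b c d : Finset α) :
    (a ∪ b ∪ c ∪ d).card ≤ a.card + (b \ a).card + (c \ a).card + (d \ a).card := by
  have h1 : (a ∪ b).card ≤ a.card + (b \ a).card := card_union_le' a b
  have h2 : (a ∪ b ∪ c).card ≤ (a ∪ b).card + (c \ (a ∪ b)).card := card_union_le' _ _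
  have h3 : (a ∪ b ∪ c ∪ d).card ≤ (a ∪ b ∪ c).card + (d \ (a ∪ b ∪ c)).card :=
    card_union_le' _ _
  have h4 : (c \ (a ∪ b)).card ≤ (c \ a).card :=
    Finset.card_le_card (Finset.sdiff_subset_sdiff (Finset.Subset.refl _) Finset.subset_union_left)
  have h5 : (d \ (a ∪ b ∪ c)).card ≤ (d \ a).card :=
    Finset.card_le_card (Finset.sdiff_subset_sdiff (Finset.Subset.refl _)
      (Finset.subset_union_left.trans Finset.subset_union_left))
  omega

lemma exists_four {α : Type*} [DecidableEq α] (s : Finset α) (h : 4 ≤ s.card) :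
    ∃ a ∈ s, ∃ b ∈ s, ∃ c ∈ s, ∃ d ∈ s,
      a ≠ b ∧ a ≠ c ∧ a ≠ d ∧ b ≠ c ∧ b ≠ d ∧ c ≠ d := by
  obtain ⟨t, hts, ht⟩ := Finset.exists_subset_card_eq (show 3 ≤ s.card by omega)
  obtain ⟨a, b, c, hab, hac, hbc, rfl⟩ := Finset.card_eq_three.1 ht
  have : ∃ d ∈ s, d ∉ ({a, b, c} : Finset α) := by
    by_contra h'
    push_neg at h'
    have := Finset.card_le_card h'
    rw [ht] at this
    omega
  obtain ⟨d, hd, hd'⟩ := this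
  simp only [Finset.mem_insert, Finset.mem_singleton, not_or] at hd'
  exact ⟨a, hts (by simp), b, hts (by simp), c, hts (by simp), d, hd,
    hab, hac, fun h => hd'.1 h.symm, hbc, fun h => hd'.2.1 h.symm, fun h => hd'.2.2 h.symm⟩

section WithG

variable (G : Finset (Finset (Fin n)))

lemma dG_pos {e p : Finset (Fin n)} (he : e ∈ G) (hpe : p ⊆ e) : 1 ≤ dG G p :=
  Finset.card_pos.2 ⟨e, Finset.mem_filter.2 ⟨he, hpe⟩⟩

variable (h3 : ∀ e ∈ G, e.card = 3)
variable (hfree64 : ∀ e₁ ∈ G, ∀ e₂ ∈ G, ∀ e₃ ∈ G, ∀ e₄ ∈ G,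
      e₁ ≠ e₂ → e₁ ≠ e₃ → e₁ ≠ e₄ → e₂ ≠ e₃ → e₂ ≠ e₄ → e₃ ≠ e₄ →
        6 < (e₁ ∪ e₂ ∪ e₃ ∪ e₄).card)
variable (hfree43 : ∀ e₁ ∈ G, ∀ e₂ ∈ G, ∀ e₃ ∈ G,
      e₁ ≠ e₂ → e₁ ≠ e₃ → e₂ ≠ e₃ → 4 < (e₁ ∪ e₂ ∪ e₃).card)

include h3 hfree64 in
lemma dG_le_three {p : Finset (Fin n)} (hp : p.card = 2) : dG G p ≤ 3 := by
  by_contra h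
  push_neg at h
  obtain ⟨a, ha, b, hb, c, hc, d, hd, hab, hac, had, hbc, hbd, hcd⟩ :=
    exists_four _ (show 4 ≤ dG G p from h)
  simp only [dG, Finset.mem_filter] at ha hb hc hd
  have h6 := hfree64 a ha.1 b hb.1 c hc.1 d hd.1 hab hac had hbc hbd hcd
  have hbnd := card_union4 a b c d
  have h1 := card_sdiff_le_one (h3 b hb.1) (inter_two hp hb.2 ha.2)
  have h2 := card_sdiff_le_one (h3 c hc.1) (inter_two hp hc.2 ha.2)
  have h4 := card_sdiff_le_one (h3 d hd.1) (inter_two hp hd.2 ha.2)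
  have := h3 a ha.1
  omega

/-- get a second edge through a pair -/
lemma second_edge {p e : Finset (Fin n)} (he : e ∈ G) (hpe : p ⊆ e) (h2 : 2 ≤ dG G p) :
    ∃ f ∈ G, p ⊆ f ∧ f ≠ e := by
  obtain ⟨f, hf, hfe⟩ := Finset.exists_mem_ne (show 1 < dG G p from h2) e
  simp only [Finset.mem_filter] at hf
  exact ⟨f, hf.1, hf.2, hfe⟩

omit h3 hfree64 hfree43 in
lemma pair_union {p q e : Finset (Fin n)} (he3 : e.card = 3) (hp : p.card = 2)
    (hq : q.card = 2) (hpe : p ⊆ e) (hqe : q ⊆ e) (hpq : p ≠ q) : p ∪ q = e := by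
  have hsub : p ∪ q ⊆ e := Finset.union_subset hpe hqe
  have hc : (p ∪ q).card ≤ 3 := he3 ▸ Finset.card_le_card hsub
  have h3' : 3 ≤ (p ∪ q).card := by
    by_contra hlt
    push_neg at hlt
    have h1 : p = p ∪ q := Finset.eq_of_subset_of_card_le Finset.subset_union_left (by omega)
    have h2 : q = p ∪ q := Finset.eq_of_subset_of_card_le Finset.subset_union_right (by omega)
    exact hpq (h1.trans h2.symm)
  exact Finset.eq_of_subset_of_card_le hsub (by omega)

include h3 hfree64 hfree43 in
/-- key lemma: a codegree-2 pair cannot lie in two edges each containing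
another pair of codegree ≥ 2. -/
lemma key_L1 {p e f q r : Finset (Fin n)} (hp : p.card = 2) (hdp : dG G p = 2)
    (he : e ∈ G) (hf : f ∈ G) (hef : e ≠ f) (hpe : p ⊆ e) (hpf : p ⊆ f)
    (hqe : q ⊆ e) (hq2 : q.card = 2) (hqp : q ≠ p) (hdq : 2 ≤ dG G q)
    (hrf : r ⊆ f) (hr2 : r.card = 2) (hrp : r ≠ p) (hdr : 2 ≤ dG G r) : False := by
  have he3 := h3 e he
  have hf3 := h3 f hf
  have hepq : p ∪ q = e := pair_union he3 hp hq2 hpe hqe (Ne.symm hqp)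
  have hfpr : p ∪ r = f := pair_union hf3 hp hr2 hpf hrf (Ne.symm hrp)
  obtain ⟨g, hg, hqg, hge⟩ := second_edge G he hqe hdq
  obtain ⟨h, hh, hrh, hhf⟩ := second_edge G hf hrf hdr
  have hg3 := h3 g hg
  have hh3 := h3 h hh
  -- g ≠ f
  have hgf : g ≠ f := by
    intro heq
    subst heq
    have : e ⊆ g := hepq ▸ Finset.union_subset hpf hqg
    exact hef (Finset.eq_of_subset_of_card_le this (by omega))
  -- h ≠ e
  have hhe : h ≠ e := by
    intro heq
    subst heq
    have : f ⊆ h := hfpr ▸ Finset.union_subset hpe hrh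
    exact hef (Finset.eq_of_subset_of_card_le this (by omega)).symm
  by_cases hgh : g = h
  · -- three edges e, f, g with union inside e ∪ f
    subst hgh
    have hqr : q ≠ r := by
      intro heq
      subst heq
      have : e ⊆ f := hepq ▸ Finset.union_subset hpf hrf
      exact hef (Finset.eq_of_subset_of_card_le this (by omega))
    have hqrg : q ∪ r ⊆ g := Finset.union_subset hqg hrh
    have hgqr : g = q ∪ r := by
      have hc : (q ∪ r).card ≤ 3 := hg3 ▸ Finset.card_le_card hqrg
      have h3' : 3 ≤ (q ∪ r).card := by
        by_contra hlt
        push_neg at hlt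
        have h1 : q = q ∪ r := Finset.eq_of_subset_of_card_le Finset.subset_union_left (by omega)
        have h2 : r = q ∪ r := Finset.eq_of_subset_of_card_le Finset.subset_union_right (by omega)
        exact hqr (h1.trans h2.symm)
      exact (Finset.eq_of_subset_of_card_le hqrg (by omega)).symm
    have hgsub : g ⊆ e ∪ f := hgqr ▸ Finset.union_subset
      (hqe.trans Finset.subset_union_left) (hrf.trans Finset.subset_union_right)
    have h4 := hfree43 e he f hf g hg hef (Ne.symm hge) (Ne.symm hgf)
    have hsub : e ∪ f ∪ g ⊆ e ∪ f := Finset.union_subset (Finset.Subset.refl _) hgsub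
    have hb1 : (e ∪ f).card ≤ e.card + (f \ e).card := card_union_le' e f
    have hb2 := card_sdiff_le_one hf3 (inter_two hp hpf hpe)
    have := Finset.card_le_card hsub
    omega
  · -- four edges e, f, g, h
    have h6 := hfree64 e he f hf g hg h hh hef (Ne.symm hge) (Ne.symm hhe)
      (Ne.symm hgf) (Ne.symm hhf) (fun hx => hgh hx)
    -- union bound: ≤ |e| + |f\e| + |g\e| + |h\f|
    have h1 : (e ∪ f).card ≤ e.card + (f \ e).card := card_union_le' e f
    have h2 : (e ∪ f ∪ g).card ≤ (e ∪ f).card + (g \ (e ∪ f)).card := card_union_le' _ _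
    have h2' : (g \ (e ∪ f)).card ≤ (g \ e).card :=
      Finset.card_le_card (Finset.sdiff_subset_sdiff (Finset.Subset.refl _)
        Finset.subset_union_left)
    have h4 : (e ∪ f ∪ g ∪ h).card ≤ (e ∪ f ∪ g).card + (h \ (e ∪ f ∪ g)).card :=
      card_union_le' _ _
    have h4' : (h \ (e ∪ f ∪ g)).card ≤ (h \ f).card :=
      Finset.card_le_card (Finset.sdiff_subset_sdiff (Finset.Subset.refl _)
        (Finset.subset_union_right.trans Finset.subset_union_left))
    have hb1 := card_sdiff_le_one hf3 (inter_two hp hpf hpe)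
    have hb2 := card_sdiff_le_one hg3 (inter_two hq2 hqg hqe)
    have hb3 := card_sdiff_le_one hh3 (inter_two hr2 hrh hrf)
    omega

lemma exists_two_other {α : Type*} [DecidableEq α] {s : Finset α} {e : α}
    (hs : s.card = 3) (he : e ∈ s) : ∃ f ∈ s, ∃ g ∈ s, f ≠ g ∧ f ≠ e ∧ g ≠ e := by
  obtain ⟨a, b, c, hab, hac, hbc, rfl⟩ := Finset.card_eq_three.1 hs
  simp only [Finset.mem_insert, Finset.mem_singleton] at he
  rcases he with rfl | rfl | rfl
  · exact ⟨b, by simp, c, by simp, hbc, Ne.symm hab, Ne.symm hac⟩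
  · exact ⟨a, by simp, c, by simp, hac, hab, Ne.symm hbc⟩
  · exact ⟨a, by simp, b, by simp, hab, hac, hbc⟩

include h3 hfree64 in
lemma exists_deg_one {e : Finset (Fin n)} (he : e ∈ G) :
    ∃ p, p ⊆ e ∧ p.card = 2 ∧ dG G p = 1 := by
  by_contra hcon
  push_neg at hcon
  have hdeg : ∀ p, p ⊆ e → p.card = 2 → 2 ≤ dG G p := by
    intro p hp hp2
    have := dG_pos G he hp
    have := hcon p hp hp2
    omega
  obtain ⟨x, y, z, hxy, hxz, hyz, he3⟩ := Finset.card_eq_three.1 (h3 e he)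
  have hxe : x ∈ e := by rw [he3]; simp
  have hye : y ∈ e := by rw [he3]; simp
  have hze : z ∈ e := by rw [he3]; simp
  have hp1e : ({x, y} : Finset (Fin n)) ⊆ e := by
    rw [Finset.insert_subset_iff, Finset.singleton_subset_iff]; exact ⟨hxe, hye⟩
  have hp2e : ({x, z} : Finset (Fin n)) ⊆ e := by
    rw [Finset.insert_subset_iff, Finset.singleton_subset_iff]; exact ⟨hxe, hze⟩
  have hp3e : ({y, z} : Finset (Fin n)) ⊆ e := by
    rw [Finset.insert_subset_iff, Finset.singleton_subset_iff]; exact ⟨hye, hze⟩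
  have hc1 : ({x, y} : Finset (Fin n)).card = 2 := Finset.card_pair hxy
  have hc2 : ({x, z} : Finset (Fin n)).card = 2 := Finset.card_pair hxz
  have hc3 : ({y, z} : Finset (Fin n)).card = 2 := Finset.card_pair hyz
  obtain ⟨f, hf, hp1f, hfe⟩ := second_edge G he hp1e (hdeg _ hp1e hc1)
  obtain ⟨g, hg, hp2g, hge⟩ := second_edge G he hp2e (hdeg _ hp2e hc2)
  obtain ⟨h, hh, hp3h, hhe⟩ := second_edge G he hp3e (hdeg _ hp3e hc3)
  have hxf : x ∈ f := hp1f (by simp)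
  have hyf : y ∈ f := hp1f (by simp)
  have hxg : x ∈ g := hp2g (by simp)
  have hzg : z ∈ g := hp2g (by simp)
  have hyh : y ∈ h := hp3h (by simp)
  have hzh : z ∈ h := hp3h (by simp)
  have hsub : ∀ w : Finset (Fin n), w ∈ G → x ∈ w → y ∈ w → z ∈ w → w = e := by
    intro w hw hxw hyw hzw
    have : e ⊆ w := by
      rw [he3]
      intro u hu
      simp only [Finset.mem_insert, Finset.mem_singleton] at hu
      rcases hu with rfl | rfl | rfl <;> assumption
    refine (Finset.eq_of_subset_of_card_le this ?_).symm
    rw [h3 e he, h3 w hw]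
  have hfg : f ≠ g := by
    intro hfg; subst hfg
    exact hfe (hsub f hf hxf hyf hzg)
  have hfh : f ≠ h := by
    intro hfh; subst hfh
    exact hfe (hsub f hf hxf hyf hzh)
  have hgh : g ≠ h := by
    intro hgh; subst hgh
    exact hge (hsub g hg hxg hyh hzg)
  have h6 := hfree64 e he f hf g hg h hh (Ne.symm hfe) (Ne.symm hge) (Ne.symm hhe) hfg hfh hgh
  have hbnd := card_union4 e f g h
  have hb1 := card_sdiff_le_one (h3 f hf) (inter_two hc1 hp1f hp1e)
  have hb2 := card_sdiff_le_one (h3 g hg) (inter_two hc2 hp2g hp2e)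
  have hb3 := card_sdiff_le_one (h3 h hh) (inter_two hc3 hp3h hp3e)
  have := h3 e he
  omega

include h3 hfree64 in
lemma deg3_other {e p q : Finset (Fin n)} (he : e ∈ G) (hpe : p ⊆ e) (hp2 : p.card = 2)
    (hqe : q ⊆ e) (hq2 : q.card = 2) (hpq : p ≠ q) (hd3 : dG G p = 3) : dG G q = 1 := by
  have h1 : 1 ≤ dG G q := dG_pos G he hqe
  by_contra hcon
  have hd2 : 2 ≤ dG G q := by omega
  obtain ⟨g, hg, hqg, hge⟩ := second_edge G he hqe hd2
  have hepq : p ∪ q = e := pair_union (h3 e he) hp2 hq2 hpe hqe hpq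
  have heF : e ∈ G.filter (fun w => p ⊆ w) := Finset.mem_filter.2 ⟨he, hpe⟩
  obtain ⟨f₁, hf₁, f₂, hf₂, h12, h1e, h2e⟩ := exists_two_other hd3 heF
  simp only [Finset.mem_filter] at hf₁ hf₂
  have hge3 : ∀ w : Finset (Fin n), w ∈ G → p ⊆ w → q ⊆ w → w = e := by
    intro w hw hpw hqw
    have : e ⊆ w := hepq ▸ Finset.union_subset hpw hqw
    refine (Finset.eq_of_subset_of_card_le this ?_).symm
    rw [h3 e he, h3 w hw]
  have hgf₁ : g ≠ f₁ := by
    intro hx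
    exact hge (hge3 g hg (hx ▸ hf₁.2) hqg)
  have hgf₂ : g ≠ f₂ := by
    intro hx
    exact hge (hge3 g hg (hx ▸ hf₂.2) hqg)
  have h6 := hfree64 e he f₁ hf₁.1 f₂ hf₂.1 g hg (Ne.symm h1e) (Ne.symm h2e) (Ne.symm hge)
    h12 (Ne.symm hgf₁) (Ne.symm hgf₂)
  have hbnd := card_union4 e f₁ f₂ g
  have hb1 := card_sdiff_le_one (h3 f₁ hf₁.1) (inter_two hp2 hf₁.2 hpe)
  have hb2 := card_sdiff_le_one (h3 f₂ hf₂.1) (inter_two hp2 hf₂.2 hpe)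
  have hb3 := card_sdiff_le_one (h3 g hg) (inter_two hq2 hqg hqe)
  have := h3 e he
  omega

omit h3 hfree64 hfree43 in
lemma sum_m_over (H : Finset (Finset (Fin n))) (k : ℕ) :
    ∑ e ∈ H, m G k e
      = ∑ p ∈ ((Finset.univ : Finset (Fin n)).powersetCard 2).filter (fun p => dG G p = k),
          (H.filter (fun e => p ⊆ e)).card := by
  have hm : ∀ e, m G k e = ∑ p ∈ (Finset.univ : Finset (Fin n)).powersetCard 2,
      if dG G p = k ∧ p ⊆ e then 1 else 0 := by
    intro e
    rw [m, ← Finset.card_filter]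
    congr 1
    ext p
    simp only [Finset.mem_filter, Finset.mem_powersetCard, Finset.subset_univ, true_and]
    tauto
  calc ∑ e ∈ H, m G k e
      = ∑ e ∈ H, ∑ p ∈ (Finset.univ : Finset (Fin n)).powersetCard 2,
          (if dG G p = k ∧ p ⊆ e then 1 else 0) := Finset.sum_congr rfl (fun e _ => hm e)
    _ = ∑ p ∈ (Finset.univ : Finset (Fin n)).powersetCard 2, ∑ e ∈ H,
          (if dG G p = k ∧ p ⊆ e then 1 else 0) := Finset.sum_comm
    _ = ∑ p ∈ (Finset.univ : Finset (Fin n)).powersetCard 2,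
          (if dG G p = k then (H.filter (fun e => p ⊆ e)).card else 0) := by
        refine Finset.sum_congr rfl fun p _ => ?_
        by_cases hk : dG G p = k
        · simp only [hk, true_and, if_true, Finset.card_filter]
        · simp [hk]
    _ = _ := (Finset.sum_filter _ _).symm

omit h3 hfree64 hfree43 in
lemma sum_m (k : ℕ) :
    ∑ e ∈ G, m G k e
      = k * (((Finset.univ : Finset (Fin n)).powersetCard 2).filter
          (fun p => dG G p = k)).card := by
  rw [sum_m_over]
  calc ∑ p ∈ ((Finset.univ : Finset (Fin n)).powersetCard 2).filter (fun p => dG G p = k),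
        (G.filter (fun e => p ⊆ e)).card
      = ∑ p ∈ ((Finset.univ : Finset (Fin n)).powersetCard 2).filter (fun p => dG G p = k), k :=
        Finset.sum_congr rfl (fun p hp => (Finset.mem_filter.1 hp).2)
    _ = _ := by rw [Finset.sum_const, smul_eq_mul, mul_comm]

include h3 in
omit hfree64 hfree43 in
lemma m_sum_three {e : Finset (Fin n)} (he : e ∈ G)
    (hd3 : ∀ p, p.card = 2 → dG G p ≤ 3) :
    m G 1 e + m G 2 e + m G 3 e = 3 := by
  classical
  have hcard : (e.powersetCard 2).card = 3 := by
    rw [Finset.card_powersetCard, h3 e he]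
    decide
  have hunion : ((e.powersetCard 2).filter (fun p => dG G p = 1) ∪
      (e.powersetCard 2).filter (fun p => dG G p = 2)) ∪
      (e.powersetCard 2).filter (fun p => dG G p = 3) = e.powersetCard 2 := by
    ext p
    simp only [Finset.mem_union, Finset.mem_filter]
    constructor
    · rintro ((⟨h, _⟩ | ⟨h, _⟩) | ⟨h, _⟩) <;> exact h
    · intro hp
      have h1 : 1 ≤ dG G p := dG_pos G he (Finset.mem_powersetCard.1 hp).1
      have h2 : dG G p ≤ 3 := hd3 p (Finset.mem_powersetCard.1 hp).2
      have : dG G p = 1 ∨ dG G p = 2 ∨ dG G p = 3 := by omega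
      tauto
  have d12 : Disjoint ((e.powersetCard 2).filter (fun p => dG G p = 1))
      ((e.powersetCard 2).filter (fun p => dG G p = 2)) := by
    rw [Finset.disjoint_left]
    intro p h1 h2
    simp only [Finset.mem_filter] at h1 h2
    omega
  have d123 : Disjoint ((e.powersetCard 2).filter (fun p => dG G p = 1) ∪
      (e.powersetCard 2).filter (fun p => dG G p = 2))
      ((e.powersetCard 2).filter (fun p => dG G p = 3)) := by
    rw [Finset.disjoint_left]
    intro p h1 h2
    simp only [Finset.mem_union, Finset.mem_filter] at h1 h2
    omega
  have := Finset.card_union_of_disjoint d123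
  rw [Finset.card_union_of_disjoint d12] at this
  rw [hunion, hcard] at this
  simpa [m] using this.symm

include h3 hfree64 in
lemma m1_pos {e : Finset (Fin n)} (he : e ∈ G) : 1 ≤ m G 1 e := by
  obtain ⟨p, hpe, hp2, hd⟩ := exists_deg_one G h3 hfree64 he
  exact Finset.card_pos.2 ⟨p, Finset.mem_filter.2 ⟨Finset.mem_powersetCard.2 ⟨hpe, hp2⟩, hd⟩⟩

include h3 hfree64 in
lemma m3_one {e : Finset (Fin n)} (he : e ∈ G) (h31 : 1 ≤ m G 3 e) :
    m G 2 e = 0 ∧ m G 3 e = 1 := by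
  obtain ⟨p, hp⟩ := Finset.card_pos.1 h31
  simp only [Finset.mem_filter, Finset.mem_powersetCard] at hp
  obtain ⟨⟨hpe, hp2⟩, hpd⟩ := hp
  have hkey : ∀ q, q ⊆ e → q.card = 2 → q ≠ p → dG G q = 1 := by
    intro q hqe hq2 hqp
    exact deg3_other G h3 hfree64 he hpe hp2 hqe hq2 (Ne.symm hqp) hpd
  constructor
  · rw [m, Finset.card_eq_zero, Finset.filter_eq_empty_iff]
    intro q hq
    simp only [Finset.mem_powersetCard] at hq
    intro hd2
    rcases eq_or_ne q p with rfl | hqp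
    · omega
    · have := hkey q hq.1 hq.2 hqp
      omega
  · have : (e.powersetCard 2).filter (fun q => dG G q = 3) = {p} := by
      ext q
      simp only [Finset.mem_filter, Finset.mem_powersetCard, Finset.mem_singleton]
      constructor
      · rintro ⟨⟨hqe, hq2⟩, hd⟩
        by_contra hqp
        have := hkey q hqe hq2 hqp
        omega
      · rintro rfl
        exact ⟨⟨hpe, hp2⟩, hpd⟩
    rw [m, this, Finset.card_singleton]

include h3 hfree64 hfree43 in
lemma two_c2_le_c1 :
    2 * (G.filter (fun e => m G 2 e = 2)).card ≤ (G.filter (fun e => m G 2 e = 1)).card := by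
  classical
  set C2 := G.filter (fun e => m G 2 e = 2) with hC2def
  set P2 := ((Finset.univ : Finset (Fin n)).powersetCard 2).filter (fun p => dG G p = 2)
    with hP2def
  have hd3 : ∀ p : Finset (Fin n), p.card = 2 → dG G p ≤ 3 :=
    fun p hp => dG_le_three G h3 hfree64 hp
  -- a pair of an edge with m₂ = 2, different from p, of codegree 2
  have getq : ∀ p : Finset (Fin n), p.card = 2 → dG G p = 2 →
      ∀ a ∈ G, m G 2 a = 2 → p ⊆ a →
      ∃ q, q ⊆ a ∧ q.card = 2 ∧ q ≠ p ∧ 2 ≤ dG G q := by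
    intro p hp2 hdp a haG ha2 hpa
    have hpmem : p ∈ (a.powersetCard 2).filter (fun q => dG G q = 2) :=
      Finset.mem_filter.2 ⟨Finset.mem_powersetCard.2 ⟨hpa, hp2⟩, hdp⟩
    have hlt : 1 < ((a.powersetCard 2).filter (fun q => dG G q = 2)).card := by
      rw [show ((a.powersetCard 2).filter (fun q => dG G q = 2)).card = m G 2 a from rfl, ha2]
      omega
    obtain ⟨q, hq, hqp⟩ := Finset.exists_mem_ne hlt p
    simp only [Finset.mem_filter, Finset.mem_powersetCard] at hq
    exact ⟨q, hq.1.1, hq.1.2, hqp, by omega⟩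
  -- each codegree-2 pair lies in at most one edge of C2
  have tle : ∀ p ∈ P2, (C2.filter (fun e => p ⊆ e)).card ≤ 1 := by
    intro p hp
    simp only [hP2def, Finset.mem_filter, Finset.mem_powersetCard] at hp
    obtain ⟨⟨-, hp2⟩, hdp⟩ := hp
    by_contra hcon
    push_neg at hcon
    obtain ⟨a, ha, b, hb, hab⟩ := Finset.one_lt_card.1 hcon
    simp only [hC2def, Finset.mem_filter] at ha hb
    obtain ⟨⟨haG, ha2⟩, hpa⟩ := ha
    obtain ⟨⟨hbG, hb2⟩, hpb⟩ := hb
    obtain ⟨q, hqa, hq2, hqp, hdq⟩ := getq p hp2 hdp a haG ha2 hpa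
    obtain ⟨r, hrb, hr2, hrp, hdr⟩ := getq p hp2 hdp b hbG hb2 hpb
    exact key_L1 G h3 hfree64 hfree43 hp2 hdp haG hbG hab hpa hpb hqa hq2 hqp hdq hrb hr2 hrp hdr
  -- double counting
  have hcount1 : ∑ e ∈ C2, m G 2 e = ∑ p ∈ P2, (C2.filter (fun e => p ⊆ e)).card := by
    rw [hP2def]; exact sum_m_over G C2 2
  have hcount2 : ∑ e ∈ C2, m G 2 e = 2 * C2.card := by
    rw [Finset.sum_congr rfl (fun e he => show m G 2 e = 2 from
      (Finset.mem_filter.1 he).2), Finset.sum_const, smul_eq_mul, mul_comm]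
  have hcount : 2 * C2.card = ∑ p ∈ P2, (C2.filter (fun e => p ⊆ e)).card := by
    rw [← hcount1, hcount2]
  set T := P2.filter (fun p => 1 ≤ (C2.filter (fun e => p ⊆ e)).card) with hTdef
  have hsumT : ∑ p ∈ P2, (C2.filter (fun e => p ⊆ e)).card = T.card := by
    rw [hTdef, Finset.card_filter]
    refine Finset.sum_congr rfl fun p hp => ?_
    have := tle p hp
    by_cases h : 1 ≤ (C2.filter (fun e => p ⊆ e)).card
    · simp only [h, if_true]; omega
    · simp only [h, if_false]; omega
  -- each pair of T yields a distinct edge with m₂ = 1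
  have existsF : ∀ p ∈ T, ∃ f, f ∈ G ∧ p ⊆ f ∧ m G 2 f = 1 := by
    intro p hp
    have hp' := Finset.mem_filter.1 hp
    have hpP2 := hp'.1
    have hpt := hp'.2
    have hpP2' := hpP2
    simp only [hP2def, Finset.mem_filter, Finset.mem_powersetCard] at hpP2'
    obtain ⟨⟨-, hp2⟩, hdp⟩ := hpP2'
    obtain ⟨e, he⟩ := Finset.card_pos.1 hpt
    simp only [Finset.mem_filter, hC2def] at he
    obtain ⟨⟨heG, he2⟩, hpe⟩ := he
    obtain ⟨f, hfG, hpf, hfe⟩ := second_edge G heG hpe (by omega)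
    have hm2f1 : 1 ≤ m G 2 f :=
      Finset.card_pos.2 ⟨p, Finset.mem_filter.2 ⟨Finset.mem_powersetCard.2 ⟨hpf, hp2⟩, hdp⟩⟩
    have hm2f2 : m G 2 f ≤ 2 := by
      have hsum := m_sum_three G h3 hfG hd3
      have h1 := m1_pos G h3 hfree64 hfG
      omega
    have hm2fne : m G 2 f ≠ 2 := by
      intro hcon
      have hfmem : f ∈ C2.filter (fun e => p ⊆ e) := by
        simp only [hC2def, Finset.mem_filter]
        exact ⟨⟨hfG, hcon⟩, hpf⟩
      have hemem : e ∈ C2.filter (fun e => p ⊆ e) := by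
        simp only [hC2def, Finset.mem_filter]
        exact ⟨⟨heG, he2⟩, hpe⟩
      have h2le : 1 < (C2.filter (fun e => p ⊆ e)).card :=
        Finset.one_lt_card.2 ⟨e, hemem, f, hfmem, Ne.symm hfe⟩
      have := tle p hpP2
      omega
    exact ⟨f, hfG, hpf, by omega⟩
  have hTC1 : T.card ≤ (G.filter (fun e => m G 2 e = 1)).card := by
    set F : Finset (Fin n) → Finset (Fin n) :=
      fun p => if h : ∃ f, f ∈ G ∧ p ⊆ f ∧ m G 2 f = 1 then h.choose else ∅ with hFdef
    have hspec : ∀ p ∈ T, F p ∈ G ∧ p ⊆ F p ∧ m G 2 (F p) = 1 := by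
      intro p hp
      have h := existsF p hp
      simp only [hFdef, dif_pos h]
      exact h.choose_spec
    refine Finset.card_le_card_of_injOn F (fun p hp => ?_) (fun p₁ hp₁ p₂ hp₂ heq => ?_)
    · obtain ⟨h1, h2, h3'⟩ := hspec p hp
      exact Finset.mem_filter.2 ⟨h1, h3'⟩
    · obtain ⟨hG₁, hsub₁, hm₁⟩ := hspec p₁ hp₁
      obtain ⟨hG₂, hsub₂, hm₂⟩ := hspec p₂ hp₂
      by_contra hne
      have hp₁' := Finset.mem_filter.1 hp₁
      have hp₂' := Finset.mem_filter.1 hp₂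
      have hq₁ := Finset.mem_filter.1 hp₁'.1
      have hq₂ := Finset.mem_filter.1 hp₂'.1
      have hc₁ := (Finset.mem_powersetCard.1 hq₁.1).2
      have hc₂ := (Finset.mem_powersetCard.1 hq₂.1).2
      have hmem₁ : p₁ ∈ ((F p₁).powersetCard 2).filter (fun q => dG G q = 2) :=
        Finset.mem_filter.2 ⟨Finset.mem_powersetCard.2 ⟨hsub₁, hc₁⟩, hq₁.2⟩
      have hmem₂ : p₂ ∈ ((F p₁).powersetCard 2).filter (fun q => dG G q = 2) :=
        Finset.mem_filter.2 ⟨Finset.mem_powersetCard.2 ⟨heq ▸ hsub₂, hc₂⟩, hq₂.2⟩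
      have : 1 < (((F p₁).powersetCard 2).filter (fun q => dG G q = 2)).card :=
        Finset.one_lt_card.2 ⟨p₁, hmem₁, p₂, hmem₂, hne⟩
      have : 1 < m G 2 (F p₁) := this
      omega
  omega

include h3 hfree64 hfree43 in
lemma main_count :
    10 * (∑ e ∈ G, m G 2 e) + 16 * (∑ e ∈ G, m G 3 e) ≤ 8 * (∑ e ∈ G, m G 1 e) := by
  classical
  have hd3 : ∀ p : Finset (Fin n), p.card = 2 → dG G p ≤ 3 :=
    fun p hp => dG_le_three G h3 hfree64 hp
  have pat : ∀ e ∈ G, (m G 2 e = 2 ∧ m G 1 e = 1 ∧ m G 3 e = 0) ∨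
      (m G 2 e = 1 ∧ m G 1 e = 2 ∧ m G 3 e = 0) ∨
      (m G 2 e = 0 ∧ 16 * m G 3 e ≤ 8 * m G 1 e) := by
    intro e he
    have hsum := m_sum_three G h3 he hd3
    have h1 := m1_pos G h3 hfree64 he
    by_cases h31 : 1 ≤ m G 3 e
    · obtain ⟨hm2, hm3⟩ := m3_one G h3 hfree64 he h31
      right; right
      exact ⟨hm2, by omega⟩
    · have hm3 : m G 3 e = 0 := by omega
      have : m G 2 e = 2 ∨ m G 2 e = 1 ∨ m G 2 e = 0 := by omega
      rcases this with h | h | h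
      · left; exact ⟨h, by omega, hm3⟩
      · right; left; exact ⟨h, by omega, hm3⟩
      · right; right; exact ⟨h, by omega⟩
  set v : Finset (Fin n) → ℤ :=
    fun e => 8 * (m G 1 e : ℤ) - 10 * (m G 2 e : ℤ) - 16 * (m G 3 e : ℤ) with hvdef
  have hsplit1 : ∑ e ∈ G, v e = ∑ e ∈ G.filter (fun e => m G 2 e = 2), v e +
      ∑ e ∈ G.filter (fun e => ¬ m G 2 e = 2), v e :=
    (Finset.sum_filter_add_sum_filter_not G _ v).symm
  have hsplit2 : ∑ e ∈ G.filter (fun e => ¬ m G 2 e = 2), v e =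
      ∑ e ∈ (G.filter (fun e => ¬ m G 2 e = 2)).filter (fun e => m G 2 e = 1), v e +
      ∑ e ∈ (G.filter (fun e => ¬ m G 2 e = 2)).filter (fun e => ¬ m G 2 e = 1), v e :=
    (Finset.sum_filter_add_sum_filter_not _ _ v).symm
  have hfilter_eq : (G.filter (fun e => ¬ m G 2 e = 2)).filter (fun e => m G 2 e = 1) =
      G.filter (fun e => m G 2 e = 1) := by
    ext e
    simp only [Finset.mem_filter]
    constructor
    · rintro ⟨⟨he, -⟩, h1⟩; exact ⟨he, h1⟩
    · rintro ⟨he, h1⟩; exact ⟨⟨he, by omega⟩, h1⟩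
  have hA : ∑ e ∈ G.filter (fun e => m G 2 e = 2), v e =
      -12 * (G.filter (fun e => m G 2 e = 2)).card := by
    rw [Finset.sum_congr rfl (fun e he => show v e = -12 from ?_), Finset.sum_const,
      nsmul_eq_mul, mul_comm]
    have he' := Finset.mem_filter.1 he
    rcases pat e he'.1 with ⟨h2, h1, h3'⟩ | ⟨h2, -, -⟩ | ⟨h2, -⟩
    · simp [hvdef, h1, h2, h3']
    · omega
    · omega
  have hB : ∑ e ∈ G.filter (fun e => m G 2 e = 1), v e =
      6 * (G.filter (fun e => m G 2 e = 1)).card := by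
    rw [Finset.sum_congr rfl (fun e he => show v e = 6 from ?_), Finset.sum_const,
      nsmul_eq_mul, mul_comm]
    have he' := Finset.mem_filter.1 he
    rcases pat e he'.1 with ⟨h2, -, -⟩ | ⟨h2, h1, h3'⟩ | ⟨h2, -⟩
    · omega
    · simp [hvdef, h1, h2, h3']
    · omega
  have hC : 0 ≤ ∑ e ∈ (G.filter (fun e => ¬ m G 2 e = 2)).filter (fun e => ¬ m G 2 e = 1),
      v e := by
    refine Finset.sum_nonneg fun e he => ?_
    have he' := Finset.mem_filter.1 he
    have he'' := Finset.mem_filter.1 he'.1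
    rcases pat e he''.1 with ⟨h2, -, -⟩ | ⟨h2, -, -⟩ | ⟨h2, hle⟩
    · exact absurd h2 he''.2
    · exact absurd h2 he'.2
    · simp only [hvdef, h2]
      push_cast
      omega
  have hcc := two_c2_le_c1 G h3 hfree64 hfree43
  have hccZ : (2 * (G.filter (fun e => m G 2 e = 2)).card : ℤ) ≤
      ((G.filter (fun e => m G 2 e = 1)).card : ℤ) := by exact_mod_cast hcc
  have hvsum : 0 ≤ ∑ e ∈ G, v e := by
    rw [hsplit1, hsplit2, hfilter_eq, hA, hB]
    have : (0:ℤ) ≤ ((G.filter (fun e => m G 2 e = 2)).card : ℤ) := by positivity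
    linarith
  have htotal : ∑ e ∈ G, v e = 8 * (∑ e ∈ G, m G 1 e : ℤ) - 10 * (∑ e ∈ G, m G 2 e : ℤ) -
      16 * (∑ e ∈ G, m G 3 e : ℤ) := by
    simp only [hvdef, Finset.sum_sub_distrib, ← Finset.mul_sum, Nat.cast_sum]
  rw [htotal] at hvsum
  have : (10 * (∑ e ∈ G, m G 2 e) + 16 * (∑ e ∈ G, m G 3 e) : ℤ) ≤
      (8 * (∑ e ∈ G, m G 1 e) : ℤ) := by push_cast; linarith
  exact_mod_cast this

end WithG

end Stmt12Aux



/-- For an `F⁽³⁾(6,4)`-free and `F⁽³⁾(4,3)`-free 3-uniform hypergraph on `n` vertices,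
with `eᵢ` the number of pairs of codegree `i` divided by `n²`, one has
`-8e₁/3 + 20e₂/3 + 16e₃ ≤ 0`. -/
theorem stmt_12 (n : ℕ) (G : Finset (Finset (Fin n)))
    (h3 : ∀ e ∈ G, e.card = 3)
    (hfree64 : ∀ e₁ ∈ G, ∀ e₂ ∈ G, ∀ e₃ ∈ G, ∀ e₄ ∈ G,
      e₁ ≠ e₂ → e₁ ≠ e₃ → e₁ ≠ e₄ → e₂ ≠ e₃ → e₂ ≠ e₄ → e₃ ≠ e₄ →
        6 < (e₁ ∪ e₂ ∪ e₃ ∪ e₄).card)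
    (hfree43 : ∀ e₁ ∈ G, ∀ e₂ ∈ G, ∀ e₃ ∈ G,
      e₁ ≠ e₂ → e₁ ≠ e₃ → e₂ ≠ e₃ → 4 < (e₁ ∪ e₂ ∪ e₃).card)
    (e₁ e₂ e₃ : ℝ)
    (he₁ : e₁ = (((Finset.univ.powersetCard 2).filter
      (fun p : Finset (Fin n) => (G.filter (fun e => p ⊆ e)).card = 1)).card : ℝ) / n ^ 2)
    (he₂ : e₂ = (((Finset.univ.powersetCard 2).filter
      (fun p : Finset (Fin n) => (G.filter (fun e => p ⊆ e)).card = 2)).card : ℝ) / n ^ 2)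
    (he₃ : e₃ = (((Finset.univ.powersetCard 2).filter
      (fun p : Finset (Fin n) => (G.filter (fun e => p ⊆ e)).card = 3)).card : ℝ) / n ^ 2) :
    -8 * e₁ / 3 + 20 * e₂ / 3 + 16 * e₃ ≤ 0 := by
    classical
  set P1 := ((Finset.univ.powersetCard 2).filter
    (fun p : Finset (Fin n) => (G.filter (fun e => p ⊆ e)).card = 1)).card with hP1
  set P2 := ((Finset.univ.powersetCard 2).filter
    (fun p : Finset (Fin n) => (G.filter (fun e => p ⊆ e)).card = 2)).card with hP2
  set P3 := ((Finset.univ.powersetCard 2).filter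
    (fun p : Finset (Fin n) => (G.filter (fun e => p ⊆ e)).card = 3)).card with hP3
  have hs1 : ∑ e ∈ G, Stmt12Aux.m G 1 e = 1 * P1 := Stmt12Aux.sum_m G 1
  have hs2 : ∑ e ∈ G, Stmt12Aux.m G 2 e = 2 * P2 := Stmt12Aux.sum_m G 2
  have hs3 : ∑ e ∈ G, Stmt12Aux.m G 3 e = 3 * P3 := Stmt12Aux.sum_m G 3
  have hmain := Stmt12Aux.main_count G h3 hfree64 hfree43
  rw [hs1, hs2, hs3] at hmain
  have hkey : (20 * (P2 : ℝ) + 48 * (P3 : ℝ)) ≤ 8 * (P1 : ℝ) := by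
    have : 20 * P2 + 48 * P3 ≤ 8 * P1 := by omega
    exact_mod_cast this
  rw [he₁, he₂, he₃]
  have hrw : -8 * ((P1 : ℝ) / n ^ 2) / 3 + 20 * ((P2 : ℝ) / n ^ 2) / 3 +
      16 * ((P3 : ℝ) / n ^ 2) =
      (20 * (P2 : ℝ) + 48 * (P3 : ℝ) - 8 * (P1 : ℝ)) / (3 * (n : ℝ) ^ 2) := by
    ring
  rw [hrw]
  apply div_nonpos_of_nonpos_of_nonneg
  · linarith
  · positivity
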